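/- Let g = 4 and let B be the positive definite symmetric bilinear form on ℝ⁴ associated to the quadratic form Σ_{i=1}^{4} r_i x_i² + Σ_{1 ≤ i < j ≤ 4, (i,j) ∉ {(1,2),(3,4)}} r_{ij} (x_i − x_j)² + r·q_ω + s·(x₁+x₂−x₃−x₄)², where q_ω(x) = 2(x₁²+x₂²+x₃²+x₄²) + 2x₁x₂ − 2(x₁+x₂)(x₃+x₄), and all r_i, r_{ij}, r, s > 0 (i.e. B lies in the interior of the Voronoi cone V₃). Then both conv{s₁, s₂, s₁+s₂, s₁+s₂+s₃, s₁+s₂+s₄} and conv{s₁, s₂, s₁+s₂+s₃, s₁+s₂+s₄, s₁+s₂+s₃+s₄} are Delaunay cells of B. -/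

import Mathlib

open Matrix Set

noncomputable section

/-- The standard lattice `ℤ^g` sitting inside `ℝ^g`. -/
def latticePts (g : ℕ) : Set (Fin g → ℝ) :=
  Set.range (fun a : Fin g → ℤ => fun i => (a i : ℝ))

/-- `σ` is a (closed) Delaunay cell of the bilinear form `B`: there is an `α ∈ ℝ^g`
such that `σ` is the convex hull of the lattice points nearest to `α`
(with respect to the distance defined by `B`). -/
def IsDelaunayCell {g : ℕ} (B : (Fin g → ℝ) → (Fin g → ℝ) → ℝ)
    (σ : Set (Fin g → ℝ)) : Prop :=
  ∃ α : Fin g → ℝ, σ = convexHull ℝ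
    {a | a ∈ latticePts g ∧ ∀ b ∈ latticePts g, B (a - α) (a - α) ≤ B (b - α) (b - α)}

/-- `C(0,S)`: the cone generated by `S` over the nonnegative reals. -/
def cone0 {g : ℕ} (S : Set (Fin g → ℝ)) : Set (Fin g → ℝ) :=
  {x | ∃ r : ℝ, 0 ≤ r ∧ ∃ y ∈ convexHull ℝ S, x = r • y}

/-- `Semi(0, S ∩ ℤ^g)`: the additive submonoid generated by the lattice points of `S`. -/
def semi0 {g : ℕ} (S : Set (Fin g → ℝ)) : Set (Fin g → ℝ) :=
  (AddSubmonoid.closure (S ∩ latticePts g) : AddSubmonoid (Fin g → ℝ))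

/-- The standard basis vector `s_i` of `ℝ^g`. -/
def stdV (g : ℕ) (i : Fin g) : Fin g → ℝ := Pi.single i 1

/-- Translation of a subset of `ℝ^g` by a lattice vector `v ∈ ℤ^g`. -/
def zTrans {g : ℕ} (v : Fin g → ℤ) (S : Set (Fin g → ℝ)) : Set (Fin g → ℝ) :=
  (fun x => (fun i => (v i : ℝ)) + x) '' S

/-- The rank-one symmetric matrix of the squared linear form `(c ⬝ x)²`. -/
def sqM (c : Fin 4 → ℝ) : Matrix (Fin 4) (Fin 4) ℝ := vecMulVec c c

/-- The matrix of the quadratic form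
`q_ω(x) = 2(x₁²+x₂²+x₃²+x₄²) + 2x₁x₂ − 2(x₁+x₂)(x₃+x₄)`. -/
def Mω : Matrix (Fin 4) (Fin 4) ℝ :=
  !![(2:ℝ), 1, -1, -1; 1, 2, -1, -1; -1, -1, 2, 0; -1, -1, 0, 2]

/-- A point in the interior of the Voronoi cone `V₃`: the matrix of
`Σ rᵢ xᵢ² + Σ_{i<j, (i,j)∉{(1,2),(3,4)}} r_{ij} (xᵢ-xⱼ)² + r·q_ω + s·(x₁+x₂-x₃-x₄)²`. -/
def MV3 (r₁ r₂ r₃ r₄ r₁₃ r₁₄ r₂₃ r₂₄ r s : ℝ) : Matrix (Fin 4) (Fin 4) ℝ :=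
  r₁ • sqM (stdV 4 0) + r₂ • sqM (stdV 4 1) + r₃ • sqM (stdV 4 2) + r₄ • sqM (stdV 4 3)
    + r₁₃ • sqM (stdV 4 0 - stdV 4 2) + r₁₄ • sqM (stdV 4 0 - stdV 4 3)
    + r₂₃ • sqM (stdV 4 1 - stdV 4 2) + r₂₄ • sqM (stdV 4 1 - stdV 4 3)
    + r • Mω + s • sqM (stdV 4 0 + stdV 4 1 - stdV 4 2 - stdV 4 3)

/-! ### Auxiliary lemmas -/

/-- The integer cast of an integer vector. -/
def castZ (m : Fin 4 → ℤ) : Fin 4 → ℝ := fun i => (m i : ℝ)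

lemma int_np (n : ℤ) : 0 ≤ n * (n - 1) := by nlinarith [sq_nonneg (2*n - 1)]

lemma int_np' (n : ℤ) : 0 ≤ (n - 1) * (n - 2) := by nlinarith [sq_nonneg (2*n - 3)]

lemma core_sq (m1 m2 m3 m4 : ℤ) :
    1 ≤ (m1-1)^2 + (m2-1)^2 + (m3-m4)^2 + (m1+m2-m3-m4-1)^2 := by
  by_contra h
  push_neg at h
  have s1 := sq_nonneg (m1-1)
  have s2 := sq_nonneg (m2-1)
  have s3 := sq_nonneg (m3-m4)
  have s4 := sq_nonneg (m1+m2-m3-m4-1)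
  have e1 : (m1-1)^2 = 0 := le_antisymm (by linarith) s1
  have e2 : (m2-1)^2 = 0 := le_antisymm (by linarith) s2
  have e3 : (m3-m4)^2 = 0 := le_antisymm (by linarith) s3
  have e4 : (m1+m2-m3-m4-1)^2 = 0 := le_antisymm (by linarith) s4
  have f1 := sq_eq_zero_iff.mp e1
  have f2 := sq_eq_zero_iff.mp e2
  have f3 := sq_eq_zero_iff.mp e3
  have f4 := sq_eq_zero_iff.mp e4
  omega

lemma aux_omega1 (m1 m2 m3 m4 : ℤ) :
    0 ≤ m1*(m1-1) + m2*(m2-1) + ((m3-m4)^2 - m3 - m4)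
        + (m1+m2-m3-m4-1)*(m1+m2-m3-m4-2) := by
  have h : m1*(m1-1) + m2*(m2-1) + ((m3-m4)^2 - m3 - m4)
        + (m1+m2-m3-m4-1)*(m1+m2-m3-m4-2)
      = (m1-1)^2 + (m2-1)^2 + (m3-m4)^2 + (m1+m2-m3-m4-1)^2 - 1 := by ring
  have := core_sq m1 m2 m3 m4
  omega

lemma aux_omega2 (m1 m2 m3 m4 : ℤ) :
    0 ≤ m1*(m1-1) + m2*(m2-1) + ((m3-m4)^2 - 2*m1 - 2*m2 + m3 + m4 + 2)
        + (m1+m2-m3-m4)*(m1+m2-m3-m4-1) := by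
  have h : m1*(m1-1) + m2*(m2-1) + ((m3-m4)^2 - 2*m1 - 2*m2 + m3 + m4 + 2)
        + (m1+m2-m3-m4)*(m1+m2-m3-m4-1)
      = (m1-1)^2 + (m2-1)^2 + (m3-m4)^2 + (m1+m2-m3-m4-1)^2 - 1 := by ring
  have := core_sq m1 m2 m3 m4
  omega

/-- Explicit entries of `MV3`. -/
lemma MV3_eq (r₁ r₂ r₃ r₄ r₁₃ r₁₄ r₂₃ r₂₄ r s : ℝ) :
    MV3 r₁ r₂ r₃ r₄ r₁₃ r₁₄ r₂₃ r₂₄ r s =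
      !![r₁+r₁₃+r₁₄+2*r+s, r+s, -r₁₃-r-s, -r₁₄-r-s;
         r+s, r₂+r₂₃+r₂₄+2*r+s, -r₂₃-r-s, -r₂₄-r-s;
         -r₁₃-r-s, -r₂₃-r-s, r₃+r₁₃+r₂₃+2*r+s, s;
         -r₁₄-r-s, -r₂₄-r-s, s, r₄+r₁₄+r₂₄+2*r+s] := by
  ext i j
  fin_cases i <;> fin_cases j <;>
    simp [MV3, sqM, Mω, stdV, vecMulVec_apply, Pi.single_apply, Matrix.vecHead,
      Matrix.vecTail] <;> ring

/-- The bilinear form of `MV3`, expanded. -/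
lemma MV3_quad (r₁ r₂ r₃ r₄ r₁₃ r₁₄ r₂₃ r₂₄ r s : ℝ) (x y : Fin 4 → ℝ) :
    x ⬝ᵥ (MV3 r₁ r₂ r₃ r₄ r₁₃ r₁₄ r₂₃ r₂₄ r s).mulVec y =
      r₁*(x 0*y 0) + r₂*(x 1*y 1) + r₃*(x 2*y 2) + r₄*(x 3*y 3)
      + r₁₃*((x 0 - x 2)*(y 0 - y 2)) + r₁₄*((x 0 - x 3)*(y 0 - y 3))
      + r₂₃*((x 1 - x 2)*(y 1 - y 2)) + r₂₄*((x 1 - x 3)*(y 1 - y 3))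
      + r*((x 0 + x 1 - x 2 - x 3)*(y 0 + y 1 - y 2 - y 3)
            + x 0*y 0 + x 1*y 1 + (x 2 - x 3)*(y 2 - y 3))
      + s*((x 0 + x 1 - x 2 - x 3)*(y 0 + y 1 - y 2 - y 3)) := by
  rw [MV3_eq]
  simp [Matrix.mulVec, dotProduct, Fin.sum_univ_four]
  ring

lemma of_np {n : ℤ} (h : n * (n - 1) = 0) : 0 ≤ n ∧ n ≤ 1 := by
  rcases mul_eq_zero.mp h with h | h <;> omega

lemma of_np' {n : ℤ} (h : (n - 1) * (n - 2) = 0) : 1 ≤ n ∧ n ≤ 2 := by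
  rcases mul_eq_zero.mp h with h | h <;> omega

lemma vec_eq4 {m : Fin 4 → ℤ} {a b c d : ℤ}
    (h0 : m 0 = a) (h1 : m 1 = b) (h2 : m 2 = c) (h3 : m 3 = d) :
    m = ![a, b, c, d] := by
  funext i; fin_cases i <;> simpa

lemma eqcase1 (m : Fin 4 → ℤ)
    (w1 : m 0 * (m 0 - 1) = 0) (w2 : m 1 * (m 1 - 1) = 0)
    (w3 : m 2 * (m 2 - 1) = 0) (w4 : m 3 * (m 3 - 1) = 0)
    (w5 : (m 0 - m 2) * (m 0 - m 2 - 1) = 0) (w6 : (m 0 - m 3) * (m 0 - m 3 - 1) = 0)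
    (w7 : (m 1 - m 2) * (m 1 - m 2 - 1) = 0) (w8 : (m 1 - m 3) * (m 1 - m 3 - 1) = 0)
    (w10 : (m 0 + m 1 - m 2 - m 3 - 1) * (m 0 + m 1 - m 2 - m 3 - 2) = 0) :
    m = ![1,0,0,0] ∨ m = ![0,1,0,0] ∨ m = ![1,1,0,0] ∨ m = ![1,1,1,0] ∨ m = ![1,1,0,1] := by
  have b1 := of_np w1
  have b2 := of_np w2
  have b3 := of_np w3
  have b4 := of_np w4
  have b5 := of_np w5
  have b6 := of_np w6
  have b7 := of_np w7
  have b8 := of_np w8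
  have b10 := of_np' w10
  clear w1 w2 w3 w4 w5 w6 w7 w8 w10
  have hfin : (m 0 = 1 ∧ m 1 = 0 ∧ m 2 = 0 ∧ m 3 = 0)
      ∨ (m 0 = 0 ∧ m 1 = 1 ∧ m 2 = 0 ∧ m 3 = 0)
      ∨ (m 0 = 1 ∧ m 1 = 1 ∧ m 2 = 0 ∧ m 3 = 0)
      ∨ (m 0 = 1 ∧ m 1 = 1 ∧ m 2 = 1 ∧ m 3 = 0)
      ∨ (m 0 = 1 ∧ m 1 = 1 ∧ m 2 = 0 ∧ m 3 = 1) := by omega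
  rcases hfin with ⟨a,b,c,d⟩|⟨a,b,c,d⟩|⟨a,b,c,d⟩|⟨a,b,c,d⟩|⟨a,b,c,d⟩
  · exact Or.inl (vec_eq4 a b c d)
  · exact Or.inr (Or.inl (vec_eq4 a b c d))
  · exact Or.inr (Or.inr (Or.inl (vec_eq4 a b c d)))
  · exact Or.inr (Or.inr (Or.inr (Or.inl (vec_eq4 a b c d))))
  · exact Or.inr (Or.inr (Or.inr (Or.inr (vec_eq4 a b c d))))

lemma eqcase2 (m : Fin 4 → ℤ)
    (w1 : m 0 * (m 0 - 1) = 0) (w2 : m 1 * (m 1 - 1) = 0)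
    (w3 : m 2 * (m 2 - 1) = 0) (w4 : m 3 * (m 3 - 1) = 0)
    (w5 : (m 0 - m 2) * (m 0 - m 2 - 1) = 0) (w6 : (m 0 - m 3) * (m 0 - m 3 - 1) = 0)
    (w7 : (m 1 - m 2) * (m 1 - m 2 - 1) = 0) (w8 : (m 1 - m 3) * (m 1 - m 3 - 1) = 0)
    (w9 : m 0 * (m 0 - 1) + m 1 * (m 1 - 1)
        + ((m 2 - m 3)^2 - 2*(m 0) - 2*(m 1) + m 2 + m 3 + 2)
        + (m 0 + m 1 - m 2 - m 3) * (m 0 + m 1 - m 2 - m 3 - 1) = 0)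
    (w10 : (m 0 + m 1 - m 2 - m 3) * (m 0 + m 1 - m 2 - m 3 - 1) = 0) :
    m = ![1,0,0,0] ∨ m = ![0,1,0,0] ∨ m = ![1,1,1,0] ∨ m = ![1,1,0,1] ∨ m = ![1,1,1,1] := by
  have b1 := of_np w1
  have b2 := of_np w2
  have b3 := of_np w3
  have b4 := of_np w4
  have b5 := of_np w5
  have b6 := of_np w6
  have b7 := of_np w7
  have b8 := of_np w8
  have b10 := of_np w10
  have hz : ¬ (m 0 = 0 ∧ m 1 = 0 ∧ m 2 = 0 ∧ m 3 = 0) := by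
    rintro ⟨a, b, c, d⟩
    rw [a, b, c, d] at w9
    norm_num at w9
  clear w1 w2 w3 w4 w5 w6 w7 w8 w9 w10
  have hfin : (m 0 = 1 ∧ m 1 = 0 ∧ m 2 = 0 ∧ m 3 = 0)
      ∨ (m 0 = 0 ∧ m 1 = 1 ∧ m 2 = 0 ∧ m 3 = 0)
      ∨ (m 0 = 1 ∧ m 1 = 1 ∧ m 2 = 1 ∧ m 3 = 0)
      ∨ (m 0 = 1 ∧ m 1 = 1 ∧ m 2 = 0 ∧ m 3 = 1)
      ∨ (m 0 = 1 ∧ m 1 = 1 ∧ m 2 = 1 ∧ m 3 = 1) := by omega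
  rcases hfin with ⟨a,b,c,d⟩|⟨a,b,c,d⟩|⟨a,b,c,d⟩|⟨a,b,c,d⟩|⟨a,b,c,d⟩
  · exact Or.inl (vec_eq4 a b c d)
  · exact Or.inr (Or.inl (vec_eq4 a b c d))
  · exact Or.inr (Or.inr (Or.inl (vec_eq4 a b c d)))
  · exact Or.inr (Or.inr (Or.inr (Or.inl (vec_eq4 a b c d))))
  · exact Or.inr (Or.inr (Or.inr (Or.inr (vec_eq4 a b c d))))

/-- Generic construction of a Delaunay cell from a linear functional certificate. -/
lemma cell_of (M : Matrix (Fin 4) (Fin 4) ℝ) (hdet : IsUnit M.det)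
    (hsym : ∀ u w : Fin 4 → ℝ, u ⬝ᵥ M.mulVec w = w ⬝ᵥ M.mulVec u)
    (lam : Fin 4 → ℝ) (cst : ℝ)
    (Vz : Set (Fin 4 → ℤ)) (Vr : Set (Fin 4 → ℝ))
    (hVr : Vr = castZ '' Vz)
    (hne : Vz.Nonempty)
    (heq : ∀ m : Fin 4 → ℤ,
      castZ m ⬝ᵥ M.mulVec (castZ m) - lam ⬝ᵥ castZ m = cst ↔ m ∈ Vz)
    (hmin : ∀ m : Fin 4 → ℤ,
      cst ≤ castZ m ⬝ᵥ M.mulVec (castZ m) - lam ⬝ᵥ castZ m) :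
    IsDelaunayCell (fun x y => x ⬝ᵥ M.mulVec y) (convexHull ℝ Vr) := by
  refine ⟨(2⁻¹ : ℝ) • (M⁻¹ *ᵥ lam), ?_⟩
  set α : Fin 4 → ℝ := (2⁻¹ : ℝ) • (M⁻¹ *ᵥ lam) with hα
  have hMα : M *ᵥ α = (2⁻¹ : ℝ) • lam := by
    rw [hα, mulVec_smul, mulVec_mulVec, Matrix.mul_nonsing_inv M hdet, one_mulVec]
  have hdist : ∀ x : Fin 4 → ℝ,
      (x - α) ⬝ᵥ M.mulVec (x - α)
        = (x ⬝ᵥ M.mulVec x - lam ⬝ᵥ x) + α ⬝ᵥ M.mulVec α := by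
    intro x
    have h1 : (x - α) ⬝ᵥ M.mulVec (x - α)
        = x ⬝ᵥ M.mulVec x - x ⬝ᵥ M.mulVec α - (α ⬝ᵥ M.mulVec x - α ⬝ᵥ M.mulVec α) := by
      rw [show M.mulVec (x - α) = M *ᵥ (x - α) from rfl, mulVec_sub, sub_dotProduct,
        dotProduct_sub, dotProduct_sub]
    rw [h1, hsym α x]
    have h2 : x ⬝ᵥ M.mulVec α = 2⁻¹ * (lam ⬝ᵥ x) := by
      rw [show M.mulVec α = M *ᵥ α from rfl, hMα, dotProduct_smul, smul_eq_mul,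
        dotProduct_comm]
    rw [h2]; ring
  have hset : {a | a ∈ latticePts 4 ∧ ∀ b ∈ latticePts 4,
      (a - α) ⬝ᵥ M.mulVec (a - α) ≤ (b - α) ⬝ᵥ M.mulVec (b - α)} = Vr := by
    ext a
    simp only [Set.mem_setOf_eq]
    constructor
    · rintro ha
      rw [hVr]
      obtain ⟨⟨mz, rfl⟩, hminpt⟩ := ha
      obtain ⟨m0, hm0⟩ := hne
      have h1 : (castZ mz - α) ⬝ᵥ M.mulVec (castZ mz - α)
          ≤ (castZ m0 - α) ⬝ᵥ M.mulVec (castZ m0 - α) :=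
        hminpt (castZ m0) ⟨m0, rfl⟩
      rw [hdist, hdist] at h1
      have h2 := (heq m0).mpr hm0
      have h3 : castZ mz ⬝ᵥ M.mulVec (castZ mz) - lam ⬝ᵥ castZ mz = cst :=
        le_antisymm (by linarith) (hmin mz)
      exact ⟨mz, (heq mz).mp h3, rfl⟩
    · intro ha
      rw [hVr] at ha
      obtain ⟨mz, hmz, rfl⟩ := ha
      refine ⟨⟨mz, rfl⟩, ?_⟩
      rintro b ⟨mb, rfl⟩
      have h4 : (castZ mz - α) ⬝ᵥ M.mulVec (castZ mz - α)
          ≤ (castZ mb - α) ⬝ᵥ M.mulVec (castZ mb - α) := by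
        rw [hdist, hdist]
        have h2 := (heq mz).mpr hmz
        have h3 := hmin mb
        linarith
      exact h4
  exact (congrArg (convexHull ℝ) hset).symm

set_option maxHeartbeats 4000000 in
/-- For `B` in the interior of the Voronoi cone `V₃`, the simplices
`conv{s₁, s₂, s₁+s₂, s₁+s₂+s₃, s₁+s₂+s₄}` and
`conv{s₁, s₂, s₁+s₂+s₃, s₁+s₂+s₄, s₁+s₂+s₃+s₄}` are Delaunay cells. -/
theorem delaunay_cells_V3_examples
    (r₁ r₂ r₃ r₄ r₁₃ r₁₄ r₂₃ r₂₄ r s : ℝ)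
    (h₁ : 0 < r₁) (h₂ : 0 < r₂) (h₃ : 0 < r₃) (h₄ : 0 < r₄)
    (h₁₃ : 0 < r₁₃) (h₁₄ : 0 < r₁₄)
    (h₂₃ : 0 < r₂₃) (h₂₄ : 0 < r₂₄) (hr : 0 < r) (hs : 0 < s) :
    IsDelaunayCell
      (fun x y => x ⬝ᵥ (MV3 r₁ r₂ r₃ r₄ r₁₃ r₁₄ r₂₃ r₂₄ r s).mulVec y)
      (convexHull ℝ
        {stdV 4 0, stdV 4 1, stdV 4 0 + stdV 4 1,
          stdV 4 0 + stdV 4 1 + stdV 4 2, stdV 4 0 + stdV 4 1 + stdV 4 3}) ∧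
    IsDelaunayCell
      (fun x y => x ⬝ᵥ (MV3 r₁ r₂ r₃ r₄ r₁₃ r₁₄ r₂₃ r₂₄ r s).mulVec y)
      (convexHull ℝ
        {stdV 4 0, stdV 4 1,
          stdV 4 0 + stdV 4 1 + stdV 4 2, stdV 4 0 + stdV 4 1 + stdV 4 3,
          stdV 4 0 + stdV 4 1 + stdV 4 2 + stdV 4 3}) := by
  set M := MV3 r₁ r₂ r₃ r₄ r₁₃ r₁₄ r₂₃ r₂₄ r s with hM
  have hquad := MV3_quad r₁ r₂ r₃ r₄ r₁₃ r₁₄ r₂₃ r₂₄ r s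
  have hsym : ∀ u w : Fin 4 → ℝ, u ⬝ᵥ M.mulVec w = w ⬝ᵥ M.mulVec u := by
    intro u w; rw [hquad, hquad]; ring
  -- positive definiteness, hence invertibility
  have hsq : ∀ z : Fin 4 → ℝ, z ⬝ᵥ M.mulVec z =
      r₁*(z 0)^2 + r₂*(z 1)^2 + r₃*(z 2)^2 + r₄*(z 3)^2
      + r₁₃*(z 0 - z 2)^2 + r₁₄*(z 0 - z 3)^2 + r₂₃*(z 1 - z 2)^2 + r₂₄*(z 1 - z 3)^2
      + r*((z 0 + z 1 - z 2 - z 3)^2 + (z 0)^2 + (z 1)^2 + (z 2 - z 3)^2)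
      + s*(z 0 + z 1 - z 2 - z 3)^2 := by
    intro z; rw [hquad]; ring
  have hpd : M.PosDef := by
    rw [posDef_iff_dotProduct_mulVec]
    constructor
    · show Mᴴ = M
      rw [hM, MV3_eq]
      ext i j
      fin_cases i <;> fin_cases j <;> simp
    · intro x hx
      have hstar : star x = x := by
        funext i; simp
      rw [hstar]
      have hz : ∃ i, x i ≠ 0 := by
        by_contra h
        push_neg at h
        exact hx (funext h)
      obtain ⟨i, hi⟩ := hz
      have key : ∀ t : ℝ, t ≠ 0 → 0 < t ^ 2 := fun t ht =>
        lt_of_le_of_ne (sq_nonneg t) (Ne.symm (pow_ne_zero 2 ht))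
      have n1 : 0 ≤ r₁*(x 0)^2 := mul_nonneg h₁.le (sq_nonneg _)
      have n2 : 0 ≤ r₂*(x 1)^2 := mul_nonneg h₂.le (sq_nonneg _)
      have n3 : 0 ≤ r₃*(x 2)^2 := mul_nonneg h₃.le (sq_nonneg _)
      have n4 : 0 ≤ r₄*(x 3)^2 := mul_nonneg h₄.le (sq_nonneg _)
      have n5 : 0 ≤ r₁₃*(x 0 - x 2)^2 := mul_nonneg h₁₃.le (sq_nonneg _)
      have n6 : 0 ≤ r₁₄*(x 0 - x 3)^2 := mul_nonneg h₁₄.le (sq_nonneg _)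
      have n7 : 0 ≤ r₂₃*(x 1 - x 2)^2 := mul_nonneg h₂₃.le (sq_nonneg _)
      have n8 : 0 ≤ r₂₄*(x 1 - x 3)^2 := mul_nonneg h₂₄.le (sq_nonneg _)
      have n9 : 0 ≤ r*((x 0 + x 1 - x 2 - x 3)^2 + (x 0)^2 + (x 1)^2 + (x 2 - x 3)^2) :=
        mul_nonneg hr.le (by positivity)
      have n10 : 0 ≤ s*(x 0 + x 1 - x 2 - x 3)^2 := mul_nonneg hs.le (sq_nonneg _)
      rw [hsq]
      fin_cases i
      · have hi' : x 0 ≠ 0 := hi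
        have := mul_pos h₁ (key _ hi'); linarith
      · have hi' : x 1 ≠ 0 := hi
        have := mul_pos h₂ (key _ hi'); linarith
      · have hi' : x 2 ≠ 0 := hi
        have := mul_pos h₃ (key _ hi'); linarith
      · have hi' : x 3 ≠ 0 := hi
        have := mul_pos h₄ (key _ hi'); linarith
  have hdet : IsUnit M.det := isUnit_iff_ne_zero.mpr hpd.det_pos.ne'
  -- dot product with an explicit 4-vector
  have hdot : ∀ (l : Fin 4 → ℝ) (x : Fin 4 → ℝ),
      l ⬝ᵥ x = l 0 * x 0 + l 1 * x 1 + l 2 * x 2 + l 3 * x 3 := by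
    intro l x; simp [dotProduct, Fin.sum_univ_four]
  -- values of castZ
  have hcz : ∀ (m : Fin 4 → ℤ) (i : Fin 4), castZ m i = (m i : ℝ) := fun _ _ => rfl
  constructor
  · -- first simplex
    set lam : Fin 4 → ℝ :=
      ![r₁+r₁₃+r₁₄+4*r+3*s, r₂+r₂₃+r₂₄+4*r+3*s,
        r₃-r₁₃-r₂₃-2*r-3*s, r₄-r₁₄-r₂₄-2*r-3*s] with hlam
    set cst : ℝ := -(2*(r+s)) with hcst
    have hid : ∀ m : Fin 4 → ℤ,
        castZ m ⬝ᵥ M.mulVec (castZ m) - lam ⬝ᵥ castZ m - cst =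
          r₁ * ((m 0 * (m 0 - 1) : ℤ) : ℝ)
          + r₂ * ((m 1 * (m 1 - 1) : ℤ) : ℝ)
          + r₃ * ((m 2 * (m 2 - 1) : ℤ) : ℝ)
          + r₄ * ((m 3 * (m 3 - 1) : ℤ) : ℝ)
          + r₁₃ * (((m 0 - m 2) * (m 0 - m 2 - 1) : ℤ) : ℝ)
          + r₁₄ * (((m 0 - m 3) * (m 0 - m 3 - 1) : ℤ) : ℝ)
          + r₂₃ * (((m 1 - m 2) * (m 1 - m 2 - 1) : ℤ) : ℝ)
          + r₂₄ * (((m 1 - m 3) * (m 1 - m 3 - 1) : ℤ) : ℝ)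
          + r * ((m 0 * (m 0 - 1) + m 1 * (m 1 - 1) + ((m 2 - m 3)^2 - m 2 - m 3)
              + (m 0 + m 1 - m 2 - m 3 - 1) * (m 0 + m 1 - m 2 - m 3 - 2) : ℤ) : ℝ)
          + s * (((m 0 + m 1 - m 2 - m 3 - 1) * (m 0 + m 1 - m 2 - m 3 - 2) : ℤ) : ℝ) := by
      intro m
      rw [hquad, hdot, hcst, hlam]
      simp only [hcz, Matrix.cons_val_zero, Matrix.cons_val_one, Matrix.head_cons,
        Matrix.cons_val_two, Matrix.tail_cons, Matrix.cons_val_three]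
      push_cast
      ring
    have hmin : ∀ m : Fin 4 → ℤ,
        cst ≤ castZ m ⬝ᵥ M.mulVec (castZ m) - lam ⬝ᵥ castZ m := by
      intro m
      have h := hid m
      have n1 : (0:ℝ) ≤ r₁ * ((m 0 * (m 0 - 1) : ℤ) : ℝ) :=
        mul_nonneg h₁.le (by exact_mod_cast int_np (m 0))
      have n2 : (0:ℝ) ≤ r₂ * ((m 1 * (m 1 - 1) : ℤ) : ℝ) :=
        mul_nonneg h₂.le (by exact_mod_cast int_np (m 1))
      have n3 : (0:ℝ) ≤ r₃ * ((m 2 * (m 2 - 1) : ℤ) : ℝ) :=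
        mul_nonneg h₃.le (by exact_mod_cast int_np (m 2))
      have n4 : (0:ℝ) ≤ r₄ * ((m 3 * (m 3 - 1) : ℤ) : ℝ) :=
        mul_nonneg h₄.le (by exact_mod_cast int_np (m 3))
      have n5 : (0:ℝ) ≤ r₁₃ * (((m 0 - m 2) * (m 0 - m 2 - 1) : ℤ) : ℝ) :=
        mul_nonneg h₁₃.le (by exact_mod_cast int_np (m 0 - m 2))
      have n6 : (0:ℝ) ≤ r₁₄ * (((m 0 - m 3) * (m 0 - m 3 - 1) : ℤ) : ℝ) :=
        mul_nonneg h₁₄.le (by exact_mod_cast int_np (m 0 - m 3))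
      have n7 : (0:ℝ) ≤ r₂₃ * (((m 1 - m 2) * (m 1 - m 2 - 1) : ℤ) : ℝ) :=
        mul_nonneg h₂₃.le (by exact_mod_cast int_np (m 1 - m 2))
      have n8 : (0:ℝ) ≤ r₂₄ * (((m 1 - m 3) * (m 1 - m 3 - 1) : ℤ) : ℝ) :=
        mul_nonneg h₂₄.le (by exact_mod_cast int_np (m 1 - m 3))
      have n9 : (0:ℝ) ≤ r * ((m 0 * (m 0 - 1) + m 1 * (m 1 - 1) + ((m 2 - m 3)^2 - m 2 - m 3)
              + (m 0 + m 1 - m 2 - m 3 - 1) * (m 0 + m 1 - m 2 - m 3 - 2) : ℤ) : ℝ) :=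
        mul_nonneg hr.le (by exact_mod_cast aux_omega1 (m 0) (m 1) (m 2) (m 3))
      have n10 : (0:ℝ) ≤ s * (((m 0 + m 1 - m 2 - m 3 - 1) * (m 0 + m 1 - m 2 - m 3 - 2) : ℤ) : ℝ) :=
        mul_nonneg hs.le (by exact_mod_cast int_np' (m 0 + m 1 - m 2 - m 3))
      linarith
    have heq : ∀ m : Fin 4 → ℤ,
        castZ m ⬝ᵥ M.mulVec (castZ m) - lam ⬝ᵥ castZ m = cst ↔
          m ∈ ({![1,0,0,0], ![0,1,0,0], ![1,1,0,0], ![1,1,1,0], ![1,1,0,1]} :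
            Set (Fin 4 → ℤ)) := by
      intro m
      constructor
      · intro hm
        have h := hid m
        rw [hm] at h
        -- sum of nonnegative terms is zero, so each is zero
        have n1 : (0:ℝ) ≤ r₁ * ((m 0 * (m 0 - 1) : ℤ) : ℝ) :=
          mul_nonneg h₁.le (by exact_mod_cast int_np (m 0))
        have n2 : (0:ℝ) ≤ r₂ * ((m 1 * (m 1 - 1) : ℤ) : ℝ) :=
          mul_nonneg h₂.le (by exact_mod_cast int_np (m 1))
        have n3 : (0:ℝ) ≤ r₃ * ((m 2 * (m 2 - 1) : ℤ) : ℝ) :=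
          mul_nonneg h₃.le (by exact_mod_cast int_np (m 2))
        have n4 : (0:ℝ) ≤ r₄ * ((m 3 * (m 3 - 1) : ℤ) : ℝ) :=
          mul_nonneg h₄.le (by exact_mod_cast int_np (m 3))
        have n5 : (0:ℝ) ≤ r₁₃ * (((m 0 - m 2) * (m 0 - m 2 - 1) : ℤ) : ℝ) :=
          mul_nonneg h₁₃.le (by exact_mod_cast int_np (m 0 - m 2))
        have n6 : (0:ℝ) ≤ r₁₄ * (((m 0 - m 3) * (m 0 - m 3 - 1) : ℤ) : ℝ) :=
          mul_nonneg h₁₄.le (by exact_mod_cast int_np (m 0 - m 3))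
        have n7 : (0:ℝ) ≤ r₂₃ * (((m 1 - m 2) * (m 1 - m 2 - 1) : ℤ) : ℝ) :=
          mul_nonneg h₂₃.le (by exact_mod_cast int_np (m 1 - m 2))
        have n8 : (0:ℝ) ≤ r₂₄ * (((m 1 - m 3) * (m 1 - m 3 - 1) : ℤ) : ℝ) :=
          mul_nonneg h₂₄.le (by exact_mod_cast int_np (m 1 - m 3))
        have n9 : (0:ℝ) ≤ r * ((m 0 * (m 0 - 1) + m 1 * (m 1 - 1) + ((m 2 - m 3)^2 - m 2 - m 3)
              + (m 0 + m 1 - m 2 - m 3 - 1) * (m 0 + m 1 - m 2 - m 3 - 2) : ℤ) : ℝ) :=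
          mul_nonneg hr.le (by exact_mod_cast aux_omega1 (m 0) (m 1) (m 2) (m 3))
        have n10 : (0:ℝ) ≤ s * (((m 0 + m 1 - m 2 - m 3 - 1) * (m 0 + m 1 - m 2 - m 3 - 2) : ℤ) : ℝ) :=
          mul_nonneg hs.le (by exact_mod_cast int_np' (m 0 + m 1 - m 2 - m 3))
        have z1 : ((m 0 * (m 0 - 1) : ℤ) : ℝ) = 0 := by
          have : r₁ * ((m 0 * (m 0 - 1) : ℤ) : ℝ) = 0 := le_antisymm (by linarith) n1
          exact (mul_eq_zero.mp this).resolve_left h₁.ne'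
        have z2 : ((m 1 * (m 1 - 1) : ℤ) : ℝ) = 0 := by
          have : r₂ * ((m 1 * (m 1 - 1) : ℤ) : ℝ) = 0 := le_antisymm (by linarith) n2
          exact (mul_eq_zero.mp this).resolve_left h₂.ne'
        have z3 : ((m 2 * (m 2 - 1) : ℤ) : ℝ) = 0 := by
          have : r₃ * ((m 2 * (m 2 - 1) : ℤ) : ℝ) = 0 := le_antisymm (by linarith) n3
          exact (mul_eq_zero.mp this).resolve_left h₃.ne'
        have z4 : ((m 3 * (m 3 - 1) : ℤ) : ℝ) = 0 := by
          have : r₄ * ((m 3 * (m 3 - 1) : ℤ) : ℝ) = 0 := le_antisymm (by linarith) n4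
          exact (mul_eq_zero.mp this).resolve_left h₄.ne'
        have z5 : (((m 0 - m 2) * (m 0 - m 2 - 1) : ℤ) : ℝ) = 0 := by
          have : r₁₃ * (((m 0 - m 2) * (m 0 - m 2 - 1) : ℤ) : ℝ) = 0 :=
            le_antisymm (by linarith) n5
          exact (mul_eq_zero.mp this).resolve_left h₁₃.ne'
        have z6 : (((m 0 - m 3) * (m 0 - m 3 - 1) : ℤ) : ℝ) = 0 := by
          have : r₁₄ * (((m 0 - m 3) * (m 0 - m 3 - 1) : ℤ) : ℝ) = 0 :=
            le_antisymm (by linarith) n6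
          exact (mul_eq_zero.mp this).resolve_left h₁₄.ne'
        have z7 : (((m 1 - m 2) * (m 1 - m 2 - 1) : ℤ) : ℝ) = 0 := by
          have : r₂₃ * (((m 1 - m 2) * (m 1 - m 2 - 1) : ℤ) : ℝ) = 0 :=
            le_antisymm (by linarith) n7
          exact (mul_eq_zero.mp this).resolve_left h₂₃.ne'
        have z8 : (((m 1 - m 3) * (m 1 - m 3 - 1) : ℤ) : ℝ) = 0 := by
          have : r₂₄ * (((m 1 - m 3) * (m 1 - m 3 - 1) : ℤ) : ℝ) = 0 :=
            le_antisymm (by linarith) n8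
          exact (mul_eq_zero.mp this).resolve_left h₂₄.ne'
        have z10 : (((m 0 + m 1 - m 2 - m 3 - 1) * (m 0 + m 1 - m 2 - m 3 - 2) : ℤ) : ℝ) = 0 := by
          have : s * (((m 0 + m 1 - m 2 - m 3 - 1) * (m 0 + m 1 - m 2 - m 3 - 2) : ℤ) : ℝ) = 0 :=
            le_antisymm (by linarith) n10
          exact (mul_eq_zero.mp this).resolve_left hs.ne'
        have w1 : m 0 * (m 0 - 1) = 0 := by exact_mod_cast z1
        have w2 : m 1 * (m 1 - 1) = 0 := by exact_mod_cast z2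
        have w3 : m 2 * (m 2 - 1) = 0 := by exact_mod_cast z3
        have w4 : m 3 * (m 3 - 1) = 0 := by exact_mod_cast z4
        have w5 : (m 0 - m 2) * (m 0 - m 2 - 1) = 0 := by exact_mod_cast z5
        have w6 : (m 0 - m 3) * (m 0 - m 3 - 1) = 0 := by exact_mod_cast z6
        have w7 : (m 1 - m 2) * (m 1 - m 2 - 1) = 0 := by exact_mod_cast z7
        have w8 : (m 1 - m 3) * (m 1 - m 3 - 1) = 0 := by exact_mod_cast z8
        have w10 : (m 0 + m 1 - m 2 - m 3 - 1) * (m 0 + m 1 - m 2 - m 3 - 2) = 0 := by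
          exact_mod_cast z10
        simp only [Set.mem_insert_iff, Set.mem_singleton_iff]
        exact eqcase1 m w1 w2 w3 w4 w5 w6 w7 w8 w10
      · intro hm
        have h := hid m
        simp only [Set.mem_insert_iff, Set.mem_singleton_iff] at hm
        rcases hm with rfl|rfl|rfl|rfl|rfl <;>
          (simp only [Matrix.cons_val_zero, Matrix.cons_val_one, Matrix.head_cons,
            Matrix.cons_val_two, Matrix.tail_cons, Matrix.cons_val_three] at h <;>
           norm_num at h <;> linarith)
    have hVr : ({stdV 4 0, stdV 4 1, stdV 4 0 + stdV 4 1,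
          stdV 4 0 + stdV 4 1 + stdV 4 2, stdV 4 0 + stdV 4 1 + stdV 4 3} :
            Set (Fin 4 → ℝ)) =
        castZ '' ({![1,0,0,0], ![0,1,0,0], ![1,1,0,0], ![1,1,1,0], ![1,1,0,1]} :
          Set (Fin 4 → ℤ)) := by
      have e1 : stdV 4 0 = castZ ![1,0,0,0] := by
        funext i; fin_cases i <;> simp [castZ, stdV, Pi.single_apply]
      have e2 : stdV 4 1 = castZ ![0,1,0,0] := by
        funext i; fin_cases i <;> simp [castZ, stdV, Pi.single_apply]
      have e3 : stdV 4 0 + stdV 4 1 = castZ ![1,1,0,0] := by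
        funext i; fin_cases i <;> simp [castZ, stdV, Pi.single_apply]
      have e4 : stdV 4 0 + stdV 4 1 + stdV 4 2 = castZ ![1,1,1,0] := by
        funext i; fin_cases i <;> simp [castZ, stdV, Pi.single_apply]
      have e5 : stdV 4 0 + stdV 4 1 + stdV 4 3 = castZ ![1,1,0,1] := by
        funext i; fin_cases i <;> simp [castZ, stdV, Pi.single_apply]
      rw [Set.image_insert_eq, Set.image_insert_eq, Set.image_insert_eq,
        Set.image_insert_eq, Set.image_singleton, e5, e4, e3, e2, e1]
    rw [hVr]
    exact cell_of M hdet hsym lam cst _ _ rfl ⟨![1,0,0,0], Set.mem_insert _ _⟩ heq hmin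
  · -- second simplex
    set lam : Fin 4 → ℝ :=
      ![r₁+r₁₃+r₁₄+4*r+s, r₂+r₂₃+r₂₄+4*r+s,
        r₃-r₁₃-r₂₃-2*r-s, r₄-r₁₄-r₂₄-2*r-s] with hlam
    set cst : ℝ := -(2*r) with hcst
    have hid : ∀ m : Fin 4 → ℤ,
        castZ m ⬝ᵥ M.mulVec (castZ m) - lam ⬝ᵥ castZ m - cst =
          r₁ * ((m 0 * (m 0 - 1) : ℤ) : ℝ)
          + r₂ * ((m 1 * (m 1 - 1) : ℤ) : ℝ)
          + r₃ * ((m 2 * (m 2 - 1) : ℤ) : ℝ)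
          + r₄ * ((m 3 * (m 3 - 1) : ℤ) : ℝ)
          + r₁₃ * (((m 0 - m 2) * (m 0 - m 2 - 1) : ℤ) : ℝ)
          + r₁₄ * (((m 0 - m 3) * (m 0 - m 3 - 1) : ℤ) : ℝ)
          + r₂₃ * (((m 1 - m 2) * (m 1 - m 2 - 1) : ℤ) : ℝ)
          + r₂₄ * (((m 1 - m 3) * (m 1 - m 3 - 1) : ℤ) : ℝ)
          + r * ((m 0 * (m 0 - 1) + m 1 * (m 1 - 1)
              + ((m 2 - m 3)^2 - 2*(m 0) - 2*(m 1) + m 2 + m 3 + 2)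
              + (m 0 + m 1 - m 2 - m 3) * (m 0 + m 1 - m 2 - m 3 - 1) : ℤ) : ℝ)
          + s * (((m 0 + m 1 - m 2 - m 3) * (m 0 + m 1 - m 2 - m 3 - 1) : ℤ) : ℝ) := by
      intro m
      rw [hquad, hdot, hcst, hlam]
      simp only [hcz, Matrix.cons_val_zero, Matrix.cons_val_one, Matrix.head_cons,
        Matrix.cons_val_two, Matrix.tail_cons, Matrix.cons_val_three]
      push_cast
      ring
    have hmin : ∀ m : Fin 4 → ℤ,
        cst ≤ castZ m ⬝ᵥ M.mulVec (castZ m) - lam ⬝ᵥ castZ m := by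
      intro m
      have h := hid m
      have n1 : (0:ℝ) ≤ r₁ * ((m 0 * (m 0 - 1) : ℤ) : ℝ) :=
        mul_nonneg h₁.le (by exact_mod_cast int_np (m 0))
      have n2 : (0:ℝ) ≤ r₂ * ((m 1 * (m 1 - 1) : ℤ) : ℝ) :=
        mul_nonneg h₂.le (by exact_mod_cast int_np (m 1))
      have n3 : (0:ℝ) ≤ r₃ * ((m 2 * (m 2 - 1) : ℤ) : ℝ) :=
        mul_nonneg h₃.le (by exact_mod_cast int_np (m 2))
      have n4 : (0:ℝ) ≤ r₄ * ((m 3 * (m 3 - 1) : ℤ) : ℝ) :=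
        mul_nonneg h₄.le (by exact_mod_cast int_np (m 3))
      have n5 : (0:ℝ) ≤ r₁₃ * (((m 0 - m 2) * (m 0 - m 2 - 1) : ℤ) : ℝ) :=
        mul_nonneg h₁₃.le (by exact_mod_cast int_np (m 0 - m 2))
      have n6 : (0:ℝ) ≤ r₁₄ * (((m 0 - m 3) * (m 0 - m 3 - 1) : ℤ) : ℝ) :=
        mul_nonneg h₁₄.le (by exact_mod_cast int_np (m 0 - m 3))
      have n7 : (0:ℝ) ≤ r₂₃ * (((m 1 - m 2) * (m 1 - m 2 - 1) : ℤ) : ℝ) :=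
        mul_nonneg h₂₃.le (by exact_mod_cast int_np (m 1 - m 2))
      have n8 : (0:ℝ) ≤ r₂₄ * (((m 1 - m 3) * (m 1 - m 3 - 1) : ℤ) : ℝ) :=
        mul_nonneg h₂₄.le (by exact_mod_cast int_np (m 1 - m 3))
      have n9 : (0:ℝ) ≤ r * ((m 0 * (m 0 - 1) + m 1 * (m 1 - 1)
              + ((m 2 - m 3)^2 - 2*(m 0) - 2*(m 1) + m 2 + m 3 + 2)
              + (m 0 + m 1 - m 2 - m 3) * (m 0 + m 1 - m 2 - m 3 - 1) : ℤ) : ℝ) :=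
        mul_nonneg hr.le (by exact_mod_cast aux_omega2 (m 0) (m 1) (m 2) (m 3))
      have n10 : (0:ℝ) ≤ s * (((m 0 + m 1 - m 2 - m 3) * (m 0 + m 1 - m 2 - m 3 - 1) : ℤ) : ℝ) :=
        mul_nonneg hs.le (by exact_mod_cast int_np (m 0 + m 1 - m 2 - m 3))
      linarith
    have heq : ∀ m : Fin 4 → ℤ,
        castZ m ⬝ᵥ M.mulVec (castZ m) - lam ⬝ᵥ castZ m = cst ↔
          m ∈ ({![1,0,0,0], ![0,1,0,0], ![1,1,1,0], ![1,1,0,1], ![1,1,1,1]} :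
            Set (Fin 4 → ℤ)) := by
      intro m
      constructor
      · intro hm
        have h := hid m
        rw [hm] at h
        have n1 : (0:ℝ) ≤ r₁ * ((m 0 * (m 0 - 1) : ℤ) : ℝ) :=
          mul_nonneg h₁.le (by exact_mod_cast int_np (m 0))
        have n2 : (0:ℝ) ≤ r₂ * ((m 1 * (m 1 - 1) : ℤ) : ℝ) :=
          mul_nonneg h₂.le (by exact_mod_cast int_np (m 1))
        have n3 : (0:ℝ) ≤ r₃ * ((m 2 * (m 2 - 1) : ℤ) : ℝ) :=
          mul_nonneg h₃.le (by exact_mod_cast int_np (m 2))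
        have n4 : (0:ℝ) ≤ r₄ * ((m 3 * (m 3 - 1) : ℤ) : ℝ) :=
          mul_nonneg h₄.le (by exact_mod_cast int_np (m 3))
        have n5 : (0:ℝ) ≤ r₁₃ * (((m 0 - m 2) * (m 0 - m 2 - 1) : ℤ) : ℝ) :=
          mul_nonneg h₁₃.le (by exact_mod_cast int_np (m 0 - m 2))
        have n6 : (0:ℝ) ≤ r₁₄ * (((m 0 - m 3) * (m 0 - m 3 - 1) : ℤ) : ℝ) :=
          mul_nonneg h₁₄.le (by exact_mod_cast int_np (m 0 - m 3))
        have n7 : (0:ℝ) ≤ r₂₃ * (((m 1 - m 2) * (m 1 - m 2 - 1) : ℤ) : ℝ) :=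
          mul_nonneg h₂₃.le (by exact_mod_cast int_np (m 1 - m 2))
        have n8 : (0:ℝ) ≤ r₂₄ * (((m 1 - m 3) * (m 1 - m 3 - 1) : ℤ) : ℝ) :=
          mul_nonneg h₂₄.le (by exact_mod_cast int_np (m 1 - m 3))
        have n9 : (0:ℝ) ≤ r * ((m 0 * (m 0 - 1) + m 1 * (m 1 - 1)
              + ((m 2 - m 3)^2 - 2*(m 0) - 2*(m 1) + m 2 + m 3 + 2)
              + (m 0 + m 1 - m 2 - m 3) * (m 0 + m 1 - m 2 - m 3 - 1) : ℤ) : ℝ) :=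
          mul_nonneg hr.le (by exact_mod_cast aux_omega2 (m 0) (m 1) (m 2) (m 3))
        have n10 : (0:ℝ) ≤ s * (((m 0 + m 1 - m 2 - m 3) * (m 0 + m 1 - m 2 - m 3 - 1) : ℤ) : ℝ) :=
          mul_nonneg hs.le (by exact_mod_cast int_np (m 0 + m 1 - m 2 - m 3))
        have z1 : ((m 0 * (m 0 - 1) : ℤ) : ℝ) = 0 := by
          have : r₁ * ((m 0 * (m 0 - 1) : ℤ) : ℝ) = 0 := le_antisymm (by linarith) n1
          exact (mul_eq_zero.mp this).resolve_left h₁.ne'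
        have z2 : ((m 1 * (m 1 - 1) : ℤ) : ℝ) = 0 := by
          have : r₂ * ((m 1 * (m 1 - 1) : ℤ) : ℝ) = 0 := le_antisymm (by linarith) n2
          exact (mul_eq_zero.mp this).resolve_left h₂.ne'
        have z3 : ((m 2 * (m 2 - 1) : ℤ) : ℝ) = 0 := by
          have : r₃ * ((m 2 * (m 2 - 1) : ℤ) : ℝ) = 0 := le_antisymm (by linarith) n3
          exact (mul_eq_zero.mp this).resolve_left h₃.ne'
        have z4 : ((m 3 * (m 3 - 1) : ℤ) : ℝ) = 0 := by
          have : r₄ * ((m 3 * (m 3 - 1) : ℤ) : ℝ) = 0 := le_antisymm (by linarith) n4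
          exact (mul_eq_zero.mp this).resolve_left h₄.ne'
        have z5 : (((m 0 - m 2) * (m 0 - m 2 - 1) : ℤ) : ℝ) = 0 := by
          have : r₁₃ * (((m 0 - m 2) * (m 0 - m 2 - 1) : ℤ) : ℝ) = 0 :=
            le_antisymm (by linarith) n5
          exact (mul_eq_zero.mp this).resolve_left h₁₃.ne'
        have z6 : (((m 0 - m 3) * (m 0 - m 3 - 1) : ℤ) : ℝ) = 0 := by
          have : r₁₄ * (((m 0 - m 3) * (m 0 - m 3 - 1) : ℤ) : ℝ) = 0 :=
            le_antisymm (by linarith) n6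
          exact (mul_eq_zero.mp this).resolve_left h₁₄.ne'
        have z7 : (((m 1 - m 2) * (m 1 - m 2 - 1) : ℤ) : ℝ) = 0 := by
          have : r₂₃ * (((m 1 - m 2) * (m 1 - m 2 - 1) : ℤ) : ℝ) = 0 :=
            le_antisymm (by linarith) n7
          exact (mul_eq_zero.mp this).resolve_left h₂₃.ne'
        have z8 : (((m 1 - m 3) * (m 1 - m 3 - 1) : ℤ) : ℝ) = 0 := by
          have : r₂₄ * (((m 1 - m 3) * (m 1 - m 3 - 1) : ℤ) : ℝ) = 0 :=
            le_antisymm (by linarith) n8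
          exact (mul_eq_zero.mp this).resolve_left h₂₄.ne'
        have z9 : ((m 0 * (m 0 - 1) + m 1 * (m 1 - 1)
              + ((m 2 - m 3)^2 - 2*(m 0) - 2*(m 1) + m 2 + m 3 + 2)
              + (m 0 + m 1 - m 2 - m 3) * (m 0 + m 1 - m 2 - m 3 - 1) : ℤ) : ℝ) = 0 := by
          have : r * ((m 0 * (m 0 - 1) + m 1 * (m 1 - 1)
              + ((m 2 - m 3)^2 - 2*(m 0) - 2*(m 1) + m 2 + m 3 + 2)
              + (m 0 + m 1 - m 2 - m 3) * (m 0 + m 1 - m 2 - m 3 - 1) : ℤ) : ℝ) = 0 :=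
            le_antisymm (by linarith) n9
          exact (mul_eq_zero.mp this).resolve_left hr.ne'
        have z10 : (((m 0 + m 1 - m 2 - m 3) * (m 0 + m 1 - m 2 - m 3 - 1) : ℤ) : ℝ) = 0 := by
          have : s * (((m 0 + m 1 - m 2 - m 3) * (m 0 + m 1 - m 2 - m 3 - 1) : ℤ) : ℝ) = 0 :=
            le_antisymm (by linarith) n10
          exact (mul_eq_zero.mp this).resolve_left hs.ne'
        have w1 : m 0 * (m 0 - 1) = 0 := by exact_mod_cast z1
        have w2 : m 1 * (m 1 - 1) = 0 := by exact_mod_cast z2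
        have w3 : m 2 * (m 2 - 1) = 0 := by exact_mod_cast z3
        have w4 : m 3 * (m 3 - 1) = 0 := by exact_mod_cast z4
        have w5 : (m 0 - m 2) * (m 0 - m 2 - 1) = 0 := by exact_mod_cast z5
        have w6 : (m 0 - m 3) * (m 0 - m 3 - 1) = 0 := by exact_mod_cast z6
        have w7 : (m 1 - m 2) * (m 1 - m 2 - 1) = 0 := by exact_mod_cast z7
        have w8 : (m 1 - m 3) * (m 1 - m 3 - 1) = 0 := by exact_mod_cast z8
        have w9 : m 0 * (m 0 - 1) + m 1 * (m 1 - 1)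
              + ((m 2 - m 3)^2 - 2*(m 0) - 2*(m 1) + m 2 + m 3 + 2)
              + (m 0 + m 1 - m 2 - m 3) * (m 0 + m 1 - m 2 - m 3 - 1) = 0 := by
          exact_mod_cast z9
        have w10 : (m 0 + m 1 - m 2 - m 3) * (m 0 + m 1 - m 2 - m 3 - 1) = 0 := by
          exact_mod_cast z10
        simp only [Set.mem_insert_iff, Set.mem_singleton_iff]
        exact eqcase2 m w1 w2 w3 w4 w5 w6 w7 w8 w9 w10
      · intro hm
        have h := hid m
        simp only [Set.mem_insert_iff, Set.mem_singleton_iff] at hm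
        rcases hm with rfl|rfl|rfl|rfl|rfl <;>
          (simp only [Matrix.cons_val_zero, Matrix.cons_val_one, Matrix.head_cons,
            Matrix.cons_val_two, Matrix.tail_cons, Matrix.cons_val_three] at h <;>
           norm_num at h <;> linarith)
    have hVr : ({stdV 4 0, stdV 4 1,
          stdV 4 0 + stdV 4 1 + stdV 4 2, stdV 4 0 + stdV 4 1 + stdV 4 3,
          stdV 4 0 + stdV 4 1 + stdV 4 2 + stdV 4 3} : Set (Fin 4 → ℝ)) =
        castZ '' ({![1,0,0,0], ![0,1,0,0], ![1,1,1,0], ![1,1,0,1], ![1,1,1,1]} :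
          Set (Fin 4 → ℤ)) := by
      have e1 : stdV 4 0 = castZ ![1,0,0,0] := by
        funext i; fin_cases i <;> simp [castZ, stdV, Pi.single_apply]
      have e2 : stdV 4 1 = castZ ![0,1,0,0] := by
        funext i; fin_cases i <;> simp [castZ, stdV, Pi.single_apply]
      have e4 : stdV 4 0 + stdV 4 1 + stdV 4 2 = castZ ![1,1,1,0] := by
        funext i; fin_cases i <;> simp [castZ, stdV, Pi.single_apply]
      have e5 : stdV 4 0 + stdV 4 1 + stdV 4 3 = castZ ![1,1,0,1] := by
        funext i; fin_cases i <;> simp [castZ, stdV, Pi.single_apply]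
      have e6 : stdV 4 0 + stdV 4 1 + stdV 4 2 + stdV 4 3 = castZ ![1,1,1,1] := by
        funext i; fin_cases i <;> simp [castZ, stdV, Pi.single_apply]
      rw [Set.image_insert_eq, Set.image_insert_eq, Set.image_insert_eq,
        Set.image_insert_eq, Set.image_singleton, e6, e4, e5, e2, e1]
    rw [hVr]
    exact cell_of M hdet hsym lam cst _ _ rfl ⟨![1,0,0,0], Set.mem_insert _ _⟩ heq hmin
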